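/- Assume γ < δ < ω₁, {f_τ : τ ∈ I} is a suitable specializing family with top level γ, Q ⊆ ℚ⁺, A ⊆ I, and X ⊆ T_δ are finite, and X has unique drop-downs to γ. Then there exists a suitable specializing family {g_τ : τ ∈ I} with top level δ such that: (1) f_τ ⊆ g_τ for all τ ∈ I; and (2) for all τ ∈ A, X↾γ and X are (g_τ,Q)-consistent. -/

import Mathlib

noncomputable section

/-- The ordinal `ω₁`. -/
def omega1 : Ordinal := (Cardinal.aleph 1).ord

/-- A normal, infinitely splitting `ω₁`-tree structure on the partial order `α`.
`height x` is the height of `x` (the order type of its set of strict predecessors,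
which is linearly ordered by `pred_linear`), and `restrict x β` is the unique node
of height `β` below `x` (for `β ≤ height x`). -/
structure OmegaOneTree (α : Type) [PartialOrder α] where
  height : α → Ordinal
  restrict : α → Ordinal → α
  height_lt_omega1 : ∀ x : α, height x < omega1
  height_strictMono : ∀ {x y : α}, x < y → height x < height y
  pred_linear : ∀ {x y z : α}, y < x → z < x → y ≤ z ∨ z ≤ y
  restrict_le : ∀ (x : α) {β : Ordinal}, β ≤ height x → restrict x β ≤ x
  height_restrict : ∀ (x : α) {β : Ordinal}, β ≤ height x → height (restrict x β) = β
  restrict_eq : ∀ {x y : α} {β : Ordinal}, y ≤ x → height y = β → restrict x β = y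
  level_nonempty : ∀ β : Ordinal, β < omega1 → ∃ x : α, height x = β
  level_countable : ∀ β : Ordinal, {x : α | height x = β}.Countable
  root_exists : ∃ r : α, height r = 0 ∧ ∀ x : α, r ≤ x
  splitting : ∀ x : α, {y : α | x < y ∧ height y = height x + 1}.Infinite
  exists_above : ∀ (x : α) {β : Ordinal}, height x < β → β < omega1 →
    ∃ y : α, x < y ∧ height y = β
  limit_eq : ∀ {x y : α}, height x = height y → Order.IsSuccLimit (height x) →
    (∀ z : α, z < x ↔ z < y) → x = y

variable {α : Type} [PartialOrder α]

/-- `a` is a tuple all of whose components have height `β`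
(i.e. an element of the product tree of height `β`). -/
def IsTupleOfHeight (T : OmegaOneTree α) {m : ℕ} (a : Fin m → α) (β : Ordinal) : Prop :=
  ∀ i, T.height (a i) = β

/-- `a` is a minimal injective tuple of height `β`: it is injective of height `β`
and none of its proper restrictions is injective. -/
def MinimalTuple (T : OmegaOneTree α) {m : ℕ} (a : Fin m → α) (β : Ordinal) : Prop :=
  IsTupleOfHeight T a β ∧ Function.Injective a ∧
    ∀ γ : Ordinal, γ < β → ¬ Function.Injective (fun i => T.restrict (a i) γ)

/-- `f` is a specializing function on `U^τ↾(β+1)`, where the minimal tuple of index `τ`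
is `aτ`.  Here `f` is a total function whose values only matter on tuples of height
`≤ β` lying in `U^τ` (i.e. componentwise above `aτ`, or componentwise strictly
below `aτ`). -/
def IsSpecFun (T : OmegaOneTree α) {n : ℕ} (aτ : Fin (n + 1) → α) (β : Ordinal)
    (f : (Fin (n + 1) → α) → ℚ) : Prop :=
  (∀ (c : Fin (n + 1) → α) (ζ : Ordinal), ζ ≤ β → IsTupleOfHeight T c ζ →
      (∀ i, c i < aτ i) → f c = -1) ∧
  (∀ (c : Fin (n + 1) → α) (ζ : Ordinal), ζ ≤ β → IsTupleOfHeight T c ζ →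
      (∀ i, aτ i ≤ c i) → 0 < f c) ∧
  (∀ (b c : Fin (n + 1) → α) (ζ ξ : Ordinal), ζ ≤ β → ξ ≤ β →
      IsTupleOfHeight T b ζ → IsTupleOfHeight T c ξ →
      (∀ i, aτ i ≤ b i) → (∀ i, aτ i ≤ c i) → (∀ i, b i < c i) → f b < f c)

/-- `g` extends `f` on `U^τ↾(γ+1)` (i.e. `f ⊆ g` for specializing functions with
top levels `γ ≤` top level of `g`). -/
def SpecExtends (T : OmegaOneTree α) {n : ℕ} (aτ : Fin (n + 1) → α) (γ : Ordinal)
    (f g : (Fin (n + 1) → α) → ℚ) : Prop :=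
  ∀ (c : Fin (n + 1) → α) (ζ : Ordinal), ζ ≤ γ → IsTupleOfHeight T c ζ →
    ((∀ i, aτ i ≤ c i) ∨ (∀ i, c i < aτ i)) → g c = f c

/-- `X↾lo` and `X` are `(f,Q)`-consistent: for every `q ∈ Q` and every tuple `c` of
elements of `X` lying in the derived tree of `aτ`, if `f(c↾lo) < q` then `f(c) < q`. -/
def SpecConsistent (T : OmegaOneTree α) {n : ℕ} (aτ : Fin (n + 1) → α)
    (f : (Fin (n + 1) → α) → ℚ) (lo : Ordinal) (Q : Set ℚ) (X : Set α) : Prop :=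
  ∀ q ∈ Q, ∀ c : Fin (n + 1) → α, (∀ i, c i ∈ X) → (∀ i, aτ i ≤ c i) →
    f (fun i => T.restrict (c i) lo) < q → f c < q

/-- The specializing family `{f τ : τ ∈ I}` with top level `γ` is suitable
(relative to the enumeration `amin` of minimal tuples). -/
def SuitableFamily (T : OmegaOneTree α) {n : ℕ} (amin : Ordinal → Fin (n + 1) → α)
    (I : Set Ordinal) (γ : Ordinal) (f : Ordinal → (Fin (n + 1) → α) → ℚ) : Prop :=
  ∀ lo hi : Ordinal, lo < hi → hi ≤ γ →
    ∀ B : Set Ordinal, B.Finite → B ⊆ I →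
      ∀ R : Set ℚ, R.Finite → (∀ q ∈ R, 0 < q) →
        ∀ t : Set α, t.Finite → (∀ x ∈ t, T.height x = hi) →
          ∀ l : ℕ, n ≤ l →
            ∀ a : Fin l → α, Function.Injective a → (∀ i, T.height (a i) = lo) →
              ∀ idx : Fin n → Fin l, Function.Injective idx →
                ∀ c : Fin n → α,
                  (∀ k, T.height (c k) = hi ∧ c k ∉ t ∧ a (idx k) < c k) →
                  ∃ b : Fin l → α,
                    (∀ i, T.height (b i) = hi ∧ b i ∉ t ∧ a i < b i) ∧
                    (∀ k, b (idx k) = c k) ∧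
                    ∀ τ ∈ B, SpecConsistent T (amin τ) (f τ) lo R (Set.range b)


namespace OmegaOneTree

variable {α : Type} [PartialOrder α]

theorem comp_of_le_le (T : OmegaOneTree α) {x y z : α} (hy : y ≤ x) (hz : z ≤ x) : y ≤ z ∨ z ≤ y := by
  rcases eq_or_lt_of_le hy with rfl | hy'
  · right; exact hz
  rcases eq_or_lt_of_le hz with rfl | hz'
  · left; exact le_of_lt hy'
  rcases T.pred_linear hy' hz' with h | h
  · left; exact h
  · right; exact h

theorem height_mono (T : OmegaOneTree α) {x y : α} (h : x ≤ y) : T.height x ≤ T.height y := by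
  rcases eq_or_lt_of_le h with rfl | h'
  · exact le_rfl
  · exact le_of_lt (T.height_strictMono h')

theorem eq_of_le_height_le (T : OmegaOneTree α) {x y : α} (h : y ≤ x) (hh : T.height x ≤ T.height y) : y = x := by
  rcases eq_or_lt_of_le h with rfl | h'
  · rfl
  · exact absurd (T.height_strictMono h') (not_lt.mpr hh)

theorem eq_of_le_le_height_eq (T : OmegaOneTree α) {x y z : α} (hy : y ≤ x) (hz : z ≤ x)
    (hh : T.height y = T.height z) : y = z := by
  rcases T.comp_of_le_le hy hz with h | h
  · exact T.eq_of_le_height_le h hh.ge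
  · exact (T.eq_of_le_height_le h hh.le).symm

theorem not_le_of_height_lt (T : OmegaOneTree α) {x y : α} (h : T.height y < T.height x) : ¬ x ≤ y := fun hxy =>
  absurd (T.height_mono hxy) (not_le.mpr h)

theorem restrict_mono (T : OmegaOneTree α) (x : α) {β₁ β₂ : Ordinal} (h12 : β₁ ≤ β₂) (h2 : β₂ ≤ T.height x) :
    T.restrict x β₁ ≤ T.restrict x β₂ := by
  have h1 : β₁ ≤ T.height x := le_trans h12 h2
  rcases T.comp_of_le_le (T.restrict_le x h1) (T.restrict_le x h2) with h | h
  · exact h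
  · have := T.eq_of_le_height_le h (by rw [T.height_restrict x h1, T.height_restrict x h2]; exact h12)
    exact this.ge

theorem restrict_lt_restrict (T : OmegaOneTree α) (x : α) {β₁ β₂ : Ordinal} (h12 : β₁ < β₂) (h2 : β₂ ≤ T.height x) :
    T.restrict x β₁ < T.restrict x β₂ := by
  refine lt_of_le_of_ne (T.restrict_mono x h12.le h2) (fun h => ?_)
  have := T.height_restrict x (le_trans h12.le h2)
  rw [h, T.height_restrict x h2] at this
  exact absurd this (ne_of_gt h12)

theorem restrict_self (T : OmegaOneTree α) {x : α} {β : Ordinal} (h : T.height x = β) : T.restrict x β = x :=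
  T.restrict_eq le_rfl h

theorem restrict_restrict (T : OmegaOneTree α) (x : α) {β₁ β₂ : Ordinal} (h12 : β₁ ≤ β₂) (h2 : β₂ ≤ T.height x) :
    T.restrict (T.restrict x β₂) β₁ = T.restrict x β₁ :=
  T.restrict_eq (T.restrict_mono x h12 h2) (T.height_restrict x (le_trans h12 h2))

theorem restrict_eq_restrict_of_le (T : OmegaOneTree α) {x y : α} {β : Ordinal} (hyx : y ≤ x) (hβ : β ≤ T.height y) :
    T.restrict x β = T.restrict y β :=
  T.restrict_eq (le_trans (T.restrict_le y hβ) hyx) (T.height_restrict y hβ)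

theorem le_restrict (T : OmegaOneTree α) {x y : α} {β : Ordinal} (hyx : y ≤ x) (h1 : T.height y ≤ β)
    (h2 : β ≤ T.height x) : y ≤ T.restrict x β := by
  rcases T.comp_of_le_le (T.restrict_le x h2) hyx with h | h
  · exact ((T.eq_of_le_height_le h (by rw [T.height_restrict x h2]; exact h1)).symm).le
  · exact h

theorem restrict_lt_self (T : OmegaOneTree α) {x : α} {β : Ordinal} (h : β < T.height x) : T.restrict x β < x := by
  refine lt_of_le_of_ne (T.restrict_le x h.le) (fun he => ?_)
  have := T.height_restrict x h.le
  rw [he] at this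
  exact absurd this h.ne'

/-- Routing lemma: we can climb from `u` to any higher level `hi`, avoiding a
finite set `W` of nodes and staying off every node of `F` of height `> height u`. -/
theorem route (T : OmegaOneTree α) (u : α) {hi : Ordinal} (hu : T.height u < hi) (hhi : hi < omega1)
    (F W : Set α) (hF : F.Finite) (hW : W.Finite) :
    ∃ v : α, T.height v = hi ∧ u < v ∧ v ∉ W ∧
      ∀ x ∈ F, T.height u < T.height x → ¬ x ≤ v := by
  set μ := T.height u with hμ
  have hBad : ((fun x => T.restrict x (μ + 1)) '' (F ∪ W)).Finite :=
    (hF.union hW).image _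
  have hS : {y : α | u < y ∧ T.height y = μ + 1}.Infinite := T.splitting u
  obtain ⟨y, hy⟩ := (hS.diff hBad).nonempty
  obtain ⟨⟨hy1, hy2⟩, hy3⟩ := hy
  have hμ1 : μ + 1 ≤ hi := Order.add_one_le_iff.mpr hu
  obtain ⟨v, hyv, hv1, hv2⟩ : ∃ v : α, y ≤ v ∧ T.height v = hi ∧ u < v := by
    rcases eq_or_lt_of_le hμ1 with he | hlt
    · exact ⟨y, le_rfl, by rw [hy2, he], hy1⟩
    · obtain ⟨v, hv, hv'⟩ := T.exists_above y (by rw [hy2]; exact hlt) hhi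
      exact ⟨v, hv.le, hv', lt_trans hy1 hv⟩
  have hres : T.restrict v (μ + 1) = y := T.restrict_eq hyv hy2
  refine ⟨v, hv1, hv2, fun hvW => ?_, fun x hx hhx hxv => ?_⟩
  · exact hy3 ⟨v, Or.inr hvW, hres⟩
  · have h1 : μ + 1 ≤ T.height x := Order.add_one_le_iff.mpr hhx
    have h2 : T.restrict x (μ + 1) = T.restrict v (μ + 1) :=
      (T.restrict_eq_restrict_of_le hxv h1).symm
    exact hy3 ⟨x, Or.inl hx, h2.trans hres⟩

end OmegaOneTree

/-- A rational strictly between two finite sets. -/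
theorem exists_rat_sep (L U : Set ℚ) (hL : L.Finite) (hU : U.Finite)
    (h : ∀ x ∈ L, ∀ y ∈ U, x < y) : ∃ v : ℚ, (∀ x ∈ L, x < v) ∧ (∀ y ∈ U, v < y) := by
  classical
  rcases L.eq_empty_or_nonempty with rfl | hLne
  · rcases U.eq_empty_or_nonempty with rfl | hUne
    · exact ⟨0, by simp, by simp⟩
    · have hne : hU.toFinset.Nonempty := (Set.Finite.toFinset_nonempty hU).mpr hUne
      refine ⟨hU.toFinset.min' hne - 1, by simp, fun y hy => ?_⟩
      have := Finset.min'_le hU.toFinset y ((Set.Finite.mem_toFinset hU).mpr hy)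
      linarith
  · have hneL : hL.toFinset.Nonempty := (Set.Finite.toFinset_nonempty hL).mpr hLne
    have hmaxmem : hL.toFinset.max' hneL ∈ L := (Set.Finite.mem_toFinset hL).mp (Finset.max'_mem _ _)
    rcases U.eq_empty_or_nonempty with rfl | hUne
    · refine ⟨hL.toFinset.max' hneL + 1, fun x hx => ?_, by simp⟩
      have := Finset.le_max' hL.toFinset x ((Set.Finite.mem_toFinset hL).mpr hx)
      linarith
    · have hneU : hU.toFinset.Nonempty := (Set.Finite.toFinset_nonempty hU).mpr hUne
      have hminmem : hU.toFinset.min' hneU ∈ U := (Set.Finite.mem_toFinset hU).mp (Finset.min'_mem _ _)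
      obtain ⟨v, hv1, hv2⟩ := exists_between (h _ hmaxmem _ hminmem)
      refine ⟨v, fun x hx => lt_of_le_of_lt ?_ hv1, fun y hy => lt_of_lt_of_le hv2 ?_⟩
      · exact Finset.le_max' hL.toFinset x ((Set.Finite.mem_toFinset hL).mpr hx)
      · exact Finset.min'_le hU.toFinset y ((Set.Finite.mem_toFinset hU).mpr hy)

open Classical in
/-- All the data and hypotheses of Proposition 3.10, bundled. -/
structure Ctx.{u} (α : Type) [PartialOrder α] where
  T : OmegaOneTree α
  n : ℕ
  amin : Ordinal.{u} → Fin (n + 1) → α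
  hamin : ∀ τ : Ordinal.{u}, τ < omega1 → ∃ β, MinimalTuple T (amin τ) β
  γ : Ordinal
  δ : Ordinal
  hγδ : γ < δ
  hδ : δ < omega1
  I : Set Ordinal.{u}
  hI : I ⊆ Set.Iio omega1
  hIc : I.Countable
  f : Ordinal.{u} → (Fin (n + 1) → α) → ℚ
  hffam : ∀ τ ∈ I, IsSpecFun T (amin τ) γ (f τ)
  hfsuit : SuitableFamily T amin I γ f
  Q : Set ℚ
  hQfin : Q.Finite
  hQpos : ∀ q ∈ Q, 0 < q
  A : Set Ordinal.{u}
  hAsub : A ⊆ I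
  hAfin : A.Finite
  X : Set α
  hXfin : X.Finite
  hXlev : ∀ x ∈ X, T.height x = δ

namespace Ctx

variable {α : Type} [PartialOrder α]

/-- Tuples in the product tree. -/
abbrev Tup (C : Ctx α) : Type := Fin (C.n + 1) → α

def Above (C : Ctx α) (τ : Ordinal) (c : C.Tup) : Prop := ∀ i, C.amin τ i ≤ c i

def Below (C : Ctx α) (τ : Ordinal) (c : C.Tup) : Prop := ∀ i, c i < C.amin τ i

/-- Componentwise restriction. -/
def res (C : Ctx α) (c : C.Tup) (β : Ordinal) : C.Tup := fun i => C.T.restrict (c i) β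

/-- Componentwise strictly below. -/
def CW (C : Ctx α) (b c : C.Tup) : Prop := ∀ i, b i < c i

theorem not_above_of_below (C : Ctx α) {τ : Ordinal} {c : C.Tup} (h : C.Below τ c) :
    ¬ C.Above τ c := fun h' => absurd (lt_of_le_of_lt (h' 0) (h 0)) (lt_irrefl _)

theorem not_below_of_above (C : Ctx α) {τ : Ordinal} {c : C.Tup} (h : C.Above τ c) :
    ¬ C.Below τ c := fun h' => absurd (lt_of_le_of_lt (h 0) (h' 0)) (lt_irrefl _)

theorem tup_height_unique (C : Ctx α) {c : C.Tup} {ζ ζ' : Ordinal}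
    (h : IsTupleOfHeight C.T c ζ) (h' : IsTupleOfHeight C.T c ζ') : ζ = ζ' := by
  rw [← h 0, ← h' 0]

theorem res_tup (C : Ctx α) {c : C.Tup} {ζ β : Ordinal} (h : IsTupleOfHeight C.T c ζ)
    (hβ : β ≤ ζ) : IsTupleOfHeight C.T (C.res c β) β := fun i =>
  C.T.height_restrict (c i) (by rw [h i]; exact hβ)

theorem res_res (C : Ctx α) {c : C.Tup} {ζ β₁ β₂ : Ordinal} (h12 : β₁ ≤ β₂)
    (h : IsTupleOfHeight C.T c ζ) (h2 : β₂ ≤ ζ) : C.res (C.res c β₂) β₁ = C.res c β₁ := by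
  funext i
  exact C.T.restrict_restrict (c i) h12 (by rw [h i]; exact h2)

theorem res_eq_self (C : Ctx α) {c : C.Tup} {ζ : Ordinal} (h : IsTupleOfHeight C.T c ζ) :
    C.res c ζ = c := by
  funext i
  exact C.T.restrict_self (h i)

/-- If `b ≤ c` componentwise and `b` is a tuple of height `ζ`, then `b = c↾ζ`. -/
theorem res_eq_of_le (C : Ctx α) {b c : C.Tup} {ζ : Ordinal} (hbc : ∀ i, b i ≤ c i)
    (hb : IsTupleOfHeight C.T b ζ) : C.res c ζ = b := by
  funext i
  exact C.T.restrict_eq (hbc i) (hb i)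

theorem res_cw (C : Ctx α) {c : C.Tup} {ζ β₁ β₂ : Ordinal} (h12 : β₁ < β₂)
    (h : IsTupleOfHeight C.T c ζ) (h2 : β₂ ≤ ζ) : C.CW (C.res c β₁) (C.res c β₂) := fun i =>
  C.T.restrict_lt_restrict (c i) h12 (by rw [h i]; exact h2)

theorem res_le (C : Ctx α) {c : C.Tup} {ζ β : Ordinal} (h : IsTupleOfHeight C.T c ζ)
    (hβ : β ≤ ζ) : ∀ i, C.res c β i ≤ c i := fun i =>
  C.T.restrict_le (c i) (by rw [h i]; exact hβ)

/-- The minimal tuple data for `τ ∈ I`. -/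
theorem amin_spec (C : Ctx α) {τ : Ordinal} (hτ : τ ∈ C.I) :
    ∃ βτ, IsTupleOfHeight C.T (C.amin τ) βτ ∧ Function.Injective (C.amin τ) := by
  obtain ⟨β, h1, h2, _⟩ := C.hamin τ (C.hI hτ)
  exact ⟨β, h1, h2⟩

/-- Tuples above a minimal tuple are injective. -/
theorem inj_above (C : Ctx α) {τ : Ordinal} {c : C.Tup} (hτ : τ ∈ C.I) (hab : C.Above τ c) :
    Function.Injective c := by
  obtain ⟨βτ, hth, hinj⟩ := C.amin_spec hτ
  intro i j hij
  refine hinj (C.T.eq_of_le_le_height_eq (hab i) ?_ (by rw [hth i, hth j]))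
  rw [hij]; exact hab j

/-- Above persists to restrictions at level `β ≥ βτ`. -/
theorem above_res (C : Ctx α) {τ : Ordinal} {c : C.Tup} {βτ β ζ : Ordinal}
    (hab : C.Above τ c) (hth : IsTupleOfHeight C.T (C.amin τ) βτ)
    (htc : IsTupleOfHeight C.T c ζ) (h1 : βτ ≤ β) (h2 : β ≤ ζ) : C.Above τ (C.res c β) :=
  fun i => C.T.le_restrict (hab i) (by rw [hth i]; exact h1) (by rw [htc i]; exact h2)

/-- If `c` is above `amin τ` but its restriction to level `β` is not, then that
restriction is strictly below `amin τ`. -/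
theorem below_res_of_not_above (C : Ctx α) {τ : Ordinal} {c : C.Tup} {β ζ : Ordinal}
    (hτ : τ ∈ C.I) (hab : C.Above τ c) (htc : IsTupleOfHeight C.T c ζ) (hβ : β ≤ ζ)
    (hna : ¬ C.Above τ (C.res c β)) : C.Below τ (C.res c β) := by
  obtain ⟨βτ, hth, _⟩ := C.amin_spec hτ
  have hrt : IsTupleOfHeight C.T (C.res c β) β := C.res_tup htc hβ
  have hβcounty : β < βτ := by
    by_contra hc
    push_neg at hc
    exact hna (C.above_res hab hth htc hc hβ)
  intro i
  have hrle : C.res c β i ≤ c i := C.res_le htc hβ i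
  rcases C.T.comp_of_le_le (hab i) hrle with h | h
  · exfalso
    have h1 : βτ ≤ β := by
      have := C.T.height_mono h
      rwa [hth i, hrt i] at this
    exact absurd h1 (not_le.mpr hβcounty)
  · refine lt_of_le_of_ne h (fun he => ?_)
    have := hrt i
    rw [he, hth i] at this
    exact absurd this (ne_of_gt hβcounty)

/-- Keys of the forcing conditions. -/
def ValidKey (C : Ctx α) (k : Ordinal × C.Tup) : Prop :=
  k.1 ∈ C.I ∧ C.Above k.1 k.2 ∧ ∃ ζ, C.γ < ζ ∧ ζ ≤ C.δ ∧ IsTupleOfHeight C.T k.2 ζ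

/-- Upper caps coming from the consistency requirement on `X`. -/
def CapSet (C : Ctx α) (k : Ordinal × C.Tup) : Set ℚ :=
  {q : ℚ | q ∈ C.Q ∧ k.1 ∈ C.A ∧ ∃ c'' : C.Tup, (∀ i, c'' i ∈ C.X) ∧ C.Above k.1 c'' ∧
    (∀ i, k.2 i ≤ c'' i) ∧ C.f k.1 (C.res c'' C.γ) < q}

theorem capSet_finite (C : Ctx α) (k : Ordinal × C.Tup) : (C.CapSet k).Finite :=
  C.hQfin.subset (fun _ hq => hq.1)

theorem capSet_anti (C : Ctx α) {k k' : Ordinal × C.Tup} (h1 : k.1 = k'.1)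
    (h2 : ∀ i, k.2 i ≤ k'.2 i) : C.CapSet k' ⊆ C.CapSet k := by
  rintro q ⟨hq, hA, c'', h3, h4, h5, h6⟩
  exact ⟨hq, h1 ▸ hA, c'', h3, h1 ▸ h4, fun i => le_trans (h2 i) (h5 i), h1 ▸ h6⟩

/-- For a valid key, `f` applied to the restriction of the key's tuple to level `γ`
agrees along componentwise-`≤` extensions. -/
theorem res_gamma_eq (C : Ctx α) {c c' : C.Tup} {ζ : Ordinal}
    (h : ∀ i, c i ≤ c' i) (htc : IsTupleOfHeight C.T c ζ) (hζ : C.γ ≤ ζ) :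
    C.res c' C.γ = C.res c C.γ := by
  funext i
  exact C.T.restrict_eq_restrict_of_le (h i) (by rw [htc i]; exact hζ)

/-- A forcing condition. -/
structure Cond (C : Ctx α) where
  dom : Set (Ordinal × C.Tup)
  fin : dom.Finite
  val : Ordinal × C.Tup → ℚ
  keys : ∀ k ∈ dom, C.ValidKey k
  mono : ∀ k ∈ dom, ∀ k' ∈ dom, k.1 = k'.1 → C.CW k.2 k'.2 → val k < val k'
  lb0 : ∀ k ∈ dom, 0 < val k
  lbf : ∀ k ∈ dom, C.f k.1 (C.res k.2 C.γ) < val k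
  cap : ∀ k ∈ dom, ∀ q ∈ C.CapSet k, val k < q

/-- Extension of conditions. -/
def Cond.LE {C : Ctx α} (p p' : C.Cond) : Prop :=
  p.dom ⊆ p'.dom ∧ ∀ k ∈ p.dom, p'.val k = p.val k

theorem Cond.LE.refl {C : Ctx α} (p : C.Cond) : p.LE p := ⟨subset_rfl, fun _ _ => rfl⟩

theorem Cond.LE.trans {C : Ctx α} {p q r : C.Cond} (h1 : p.LE q) (h2 : q.LE r) : p.LE r :=
  ⟨h1.1.trans h2.1, fun k hk => (h2.2 k (h1.1 hk)).trans (h1.2 k hk)⟩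

/-- The empty condition. -/
def emptyCond (C : Ctx α) : C.Cond where
  dom := ∅
  fin := Set.finite_empty
  val := fun _ => 0
  keys := fun _ h => absurd h (Set.notMem_empty _)
  mono := fun _ h => absurd h (Set.notMem_empty _)
  lb0 := fun _ h => absurd h (Set.notMem_empty _)
  lbf := fun _ h => absurd h (Set.notMem_empty _)
  cap := fun _ h => absurd h (Set.notMem_empty _)

/-- Adding a single key to a condition, with prescribed finite upper targets `U`. -/
theorem extend_one (C : Ctx α) (p : C.Cond) (k : Ordinal × C.Tup) (hk : C.ValidKey k)
    (hkd : k ∉ p.dom) (U : Set ℚ) (hUfin : U.Finite)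
    (hU1 : ∀ u ∈ U, 0 < u) (hU2 : ∀ u ∈ U, C.f k.1 (C.res k.2 C.γ) < u)
    (hU3 : ∀ u ∈ U, ∀ k' ∈ p.dom, k'.1 = k.1 → C.CW k'.2 k.2 → p.val k' < u) :
    ∃ p' : C.Cond, p.LE p' ∧ p'.dom = insert k p.dom ∧ (∀ u ∈ U, p'.val k < u) := by
  classical
  obtain ⟨hkI, hkab, ζ, hζ1, hζ2, hζ3⟩ := hk
  set L : Set ℚ := {C.f k.1 (C.res k.2 C.γ), 0} ∪
    p.val '' {k' ∈ p.dom | k'.1 = k.1 ∧ C.CW k'.2 k.2} with hL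
  set Uu : Set ℚ := U ∪ p.val '' {k' ∈ p.dom | k'.1 = k.1 ∧ C.CW k.2 k'.2} ∪ C.CapSet k with hUu
  have hLfin : L.Finite := by
    refine Set.Finite.union (by simp) (Set.Finite.image _ (p.fin.subset (fun _ h => h.1)))
  have hUufin : Uu.Finite := by
    refine Set.Finite.union (Set.Finite.union hUfin ?_) (C.capSet_finite k)
    exact Set.Finite.image _ (p.fin.subset (fun _ h => h.1))
  -- every element of L is < every element of Uu
  have hLU : ∀ x ∈ L, ∀ y ∈ Uu, x < y := by
    rintro x hx y hy
    have hx' : x = C.f k.1 (C.res k.2 C.γ) ∨ x = 0 ∨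
        ∃ k' ∈ p.dom, k'.1 = k.1 ∧ C.CW k'.2 k.2 ∧ p.val k' = x := by
      rcases hx with hx | ⟨k', ⟨h1, h2, h3⟩, h4⟩
      · rcases hx with hx | hx
        · exact Or.inl hx
        · exact Or.inr (Or.inl hx)
      · exact Or.inr (Or.inr ⟨k', h1, h2, h3, h4⟩)
    rcases hy with (hy | ⟨k'', ⟨hd'', he'', hcw''⟩, hv''⟩) | hy
    · -- y ∈ U
      rcases hx' with rfl | rfl | ⟨k', h1, h2, h3, rfl⟩
      · exact hU2 y hy
      · exact hU1 y hy
      · exact hU3 y hy k' h1 h2 h3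
    · -- y is the value of a key strictly above k
      subst hv''
      rcases hx' with rfl | rfl | ⟨k', h1, h2, h3, rfl⟩
      · have : C.res k''.2 C.γ = C.res k.2 C.γ :=
          C.res_gamma_eq (fun i => (hcw'' i).le) hζ3 hζ1.le
        calc C.f k.1 (C.res k.2 C.γ) = C.f k''.1 (C.res k''.2 C.γ) := by rw [this, he'']
        _ < p.val k'' := p.lbf k'' hd''
      · exact p.lb0 k'' hd''
      · exact p.mono k' h1 k'' hd'' (h2.trans he''.symm) (fun i => lt_trans (h3 i) (hcw'' i))
    · -- y ∈ CapSet k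
      obtain ⟨hyQ, hyA, c'', hc1, hc2, hc3, hc4⟩ := hy
      rcases hx' with rfl | rfl | ⟨k', h1, h2, h3, rfl⟩
      · have : C.res c'' C.γ = C.res k.2 C.γ := C.res_gamma_eq hc3 hζ3 hζ1.le
        rw [← this]; exact hc4
      · exact C.hQpos y hyQ
      · refine p.cap k' h1 y ?_
        refine C.capSet_anti h2 (fun i => (h3 i).le) ?_
        exact ⟨hyQ, hyA, c'', hc1, hc2, hc3, hc4⟩
  obtain ⟨v, hv1, hv2⟩ := exists_rat_sep L Uu hLfin hUufin hLU
  letI : DecidableEq (Ordinal × C.Tup) := Classical.decEq _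
  have hne : ∀ k0 ∈ p.dom, k0 ≠ k := fun k0 hk0 he => hkd (he ▸ hk0)
  refine ⟨⟨insert k p.dom, p.fin.insert k, Function.update p.val k v,
    ?_, ?_, ?_, ?_, ?_⟩, ⟨Set.subset_insert _ _, fun k0 hk0 =>
      Function.update_of_ne (hne k0 hk0) _ _⟩,
    rfl, fun u hu => by
      show Function.update p.val k v k < u
      rw [Function.update_self]; exact hv2 u (Or.inl (Or.inl hu))⟩
  · rintro k0 (rfl | hk0)
    · exact ⟨hkI, hkab, ζ, hζ1, hζ2, hζ3⟩
    · exact p.keys k0 hk0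
  · rintro k1 hk1 k2 hk2 he hcw
    rcases hk1 with rfl | hk1 <;> rcases hk2 with rfl | hk2
    · exact absurd (hcw 0) (lt_irrefl _)
    · rw [Function.update_self, Function.update_of_ne (hne k2 hk2)]
      exact hv2 _ (Or.inl (Or.inr ⟨k2, ⟨hk2, he.symm, hcw⟩, rfl⟩))
    · rw [Function.update_self, Function.update_of_ne (hne k1 hk1)]
      exact hv1 _ (Or.inr ⟨k1, ⟨hk1, he, hcw⟩, rfl⟩)
    · rw [Function.update_of_ne (hne k1 hk1), Function.update_of_ne (hne k2 hk2)]
      exact p.mono k1 hk1 k2 hk2 he hcw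
  · rintro k0 (rfl | hk0)
    · rw [Function.update_self]; exact hv1 0 (Or.inl (by simp))
    · rw [Function.update_of_ne (hne k0 hk0)]; exact p.lb0 k0 hk0
  · rintro k0 (rfl | hk0)
    · rw [Function.update_self]; exact hv1 _ (Or.inl (by simp))
    · rw [Function.update_of_ne (hne k0 hk0)]; exact p.lbf k0 hk0
  · rintro k0 (rfl | hk0) q hq
    · rw [Function.update_self]; exact hv2 q (Or.inr hq)
    · rw [Function.update_of_ne (hne k0 hk0)]; exact p.cap k0 hk0 q hq

/-- Adding finitely many keys (no value control). -/
theorem add_many (C : Ctx α) (K : Set (Ordinal × C.Tup)) (hKfin : K.Finite) :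
    ∀ p : C.Cond, (∀ k ∈ K, C.ValidKey k) → ∃ p' : C.Cond, p.LE p' ∧ K ⊆ p'.dom := by
  classical
  refine Set.Finite.induction_on
    (motive := fun K _ => ∀ p : C.Cond, (∀ k ∈ K, C.ValidKey k) →
      ∃ p' : C.Cond, p.LE p' ∧ K ⊆ p'.dom) _ hKfin
    (fun p _ => ⟨p, Cond.LE.refl p, Set.empty_subset _⟩) ?_
  intro k K' hkK' hK'fin ih p hKv
  obtain ⟨p1, hp1, hK'p1⟩ := ih p (fun k' hk' => hKv k' (Set.mem_insert_of_mem _ hk'))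
  by_cases hkd : k ∈ p1.dom
  · exact ⟨p1, hp1, Set.insert_subset hkd hK'p1⟩
  · obtain ⟨p2, hp2, hd2, _⟩ := C.extend_one p1 k (hKv k (Set.mem_insert _ _)) hkd ∅
      Set.finite_empty (by simp) (by simp) (by simp)
    exact ⟨p2, hp1.trans hp2,
      Set.insert_subset (hd2 ▸ Set.mem_insert _ _)
        (hK'p1.trans (hd2 ▸ Set.subset_insert _ _))⟩

/-- Adding finitely many fresh, pairwise height-incomparable keys with value control. -/
theorem add_fresh (C : Ctx α) (K : Set (Ordinal × C.Tup)) (hKfin : K.Finite)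
    (U : (Ordinal × C.Tup) → Set ℚ) :
    ∀ p : C.Cond,
    (∀ k ∈ K, C.ValidKey k) →
    (∀ k ∈ K, k ∉ p.dom) →
    (∀ k ∈ K, ∀ k' ∈ K, ¬ C.CW k.2 k'.2) →
    (∀ k ∈ K, (U k).Finite) →
    (∀ k ∈ K, ∀ u ∈ U k, 0 < u) →
    (∀ k ∈ K, ∀ u ∈ U k, C.f k.1 (C.res k.2 C.γ) < u) →
    (∀ k ∈ K, ∀ u ∈ U k, ∀ k' ∈ p.dom, k'.1 = k.1 → C.CW k'.2 k.2 → p.val k' < u) →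
    ∃ p' : C.Cond, p.LE p' ∧ p'.dom = p.dom ∪ K ∧ ∀ k ∈ K, ∀ u ∈ U k, p'.val k < u := by
  classical
  refine Set.Finite.induction_on
    (motive := fun K _ => ∀ p : C.Cond,
      (∀ k ∈ K, C.ValidKey k) → (∀ k ∈ K, k ∉ p.dom) →
      (∀ k ∈ K, ∀ k' ∈ K, ¬ C.CW k.2 k'.2) →
      (∀ k ∈ K, (U k).Finite) → (∀ k ∈ K, ∀ u ∈ U k, 0 < u) →
      (∀ k ∈ K, ∀ u ∈ U k, C.f k.1 (C.res k.2 C.γ) < u) →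
      (∀ k ∈ K, ∀ u ∈ U k, ∀ k' ∈ p.dom, k'.1 = k.1 → C.CW k'.2 k.2 → p.val k' < u) →
      ∃ p' : C.Cond, p.LE p' ∧ p'.dom = p.dom ∪ K ∧ ∀ k ∈ K, ∀ u ∈ U k, p'.val k < u) _ hKfin
    (fun p _ _ _ _ _ _ _ => ⟨p, Cond.LE.refl p, by simp, by simp⟩) ?_
  intro k K' hkK' hK'fin ih p hv hd hpair hUf hU1 hU2 hU3
  obtain ⟨p1, hp1, hd1, hb1⟩ := ih p
    (fun k' h => hv k' (Set.mem_insert_of_mem _ h))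
    (fun k' h => hd k' (Set.mem_insert_of_mem _ h))
    (fun k' h k'' h' => hpair k' (Set.mem_insert_of_mem _ h) k'' (Set.mem_insert_of_mem _ h'))
    (fun k' h => hUf k' (Set.mem_insert_of_mem _ h))
    (fun k' h => hU1 k' (Set.mem_insert_of_mem _ h))
    (fun k' h => hU2 k' (Set.mem_insert_of_mem _ h))
    (fun k' h => hU3 k' (Set.mem_insert_of_mem _ h))
  have hkk : k ∈ insert k K' := Set.mem_insert _ _
  have hkd1 : k ∉ p1.dom := by
    rw [hd1]
    rintro (h | h)
    · exact hd k hkk h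
    · exact hkK' h
  have hbelow : ∀ u ∈ U k, ∀ k' ∈ p1.dom, k'.1 = k.1 → C.CW k'.2 k.2 → p1.val k' < u := by
    intro u hu k' hk' he hcw
    rw [hd1] at hk'
    rcases hk' with hk' | hk'
    · rw [hp1.2 k' hk']
      exact hU3 k hkk u hu k' hk' he hcw
    · exact absurd hcw (hpair k' (Set.mem_insert_of_mem _ hk') k hkk)
  obtain ⟨p2, hp2, hd2, hb2⟩ := C.extend_one p1 k (hv k hkk) hkd1 (U k) (hUf k hkk)
    (hU1 k hkk) (hU2 k hkk) hbelow
  refine ⟨p2, hp1.trans hp2, ?_, ?_⟩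
  · rw [hd2, hd1, Set.union_insert]
  · rintro k0 (rfl | hk0) u hu
    · exact hb2 u hu
    · have hmem : k0 ∈ p1.dom := by rw [hd1]; exact Or.inr hk0
      rw [hp2.2 k0 hmem]
      exact hb1 k0 hk0 u hu

/-- Finiteness of tuple sets with components in a finite set. -/
theorem tup_finite (C : Ctx α) (s : Set α) (hs : s.Finite) :
    {c : C.Tup | ∀ i, c i ∈ s}.Finite := by
  have h := Set.Finite.pi (fun _ : Fin (C.n + 1) => hs)
  refine h.subset (fun c hc => ?_)
  simp only [Set.mem_pi, Set.mem_univ, forall_true_left]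
  exact hc

/-- Every tuple above `amin τ` with components from an `l`-tuple `b` has a coordinate
which is not a forced (`idx`) coordinate of `b`. -/
theorem free_coord (C : Ctx α) {τ : Ordinal} {c' : C.Tup} (hτ : τ ∈ C.I)
    (hab : C.Above τ c') {l : ℕ} (b : Fin l → α) (idx : Fin C.n → Fin l)
    (hrange : ∀ i, c' i ∈ Set.range b) :
    ∃ j : Fin l, (∀ k, idx k ≠ j) ∧ ∃ i, c' i = b j := by
  classical
  have hinj : Function.Injective c' := C.inj_above hτ hab
  have hφ : ∀ i : Fin (C.n + 1), ∃ j, c' i = b j := fun i => (hrange i).imp (fun j h => h.symm)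
  choose φ hφs using hφ
  have hφinj : Function.Injective φ := by
    intro i i' h
    exact hinj (by rw [hφs i, hφs i', h])
  by_contra hcon
  push_neg at hcon
  have hψ : ∀ i : Fin (C.n + 1), ∃ k, idx k = φ i := by
    intro i
    by_contra h
    push_neg at h
    exact hcon (φ i) h i (hφs i)
  choose ψ hψs using hψ
  have hψinj : Function.Injective ψ := fun i i' h =>
    hφinj (by rw [← hψs i, ← hψs i', h])
  have hcard := Fintype.card_le_of_injective ψ hψinj
  simp only [Fintype.card_fin] at hcard
  omega

open Classical in
/-- The "current value at the lower level" used in consistency statements. -/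
noncomputable def Vv (C : Ctx α) (p : C.Cond) (lo τ : Ordinal) (c' : C.Tup) : ℚ :=
  if lo ≤ C.γ then C.f τ (C.res c' lo)
  else if C.Above τ (C.res c' lo) then p.val (τ, C.res c' lo)
  else -1

/-- The density lemma: any condition extends to one deciding a full suitability
challenge at levels `lo < hi` with `γ < hi ≤ δ`. -/
theorem density (C : Ctx α) (lo hi : Ordinal) (hlh : lo < hi) (hhd : hi ≤ C.δ)
    (hγhi : C.γ < hi)
    (B : Set Ordinal) (hBf : B.Finite) (hBI : B ⊆ C.I)
    (R : Set ℚ) (hRf : R.Finite) (hRpos : ∀ q ∈ R, 0 < q)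
    (t : Set α) (htf : t.Finite)
    (l : ℕ) (hnl : C.n ≤ l) (a : Fin l → α) (hainj : Function.Injective a)
    (halev : ∀ i, C.T.height (a i) = lo)
    (idx : Fin C.n → Fin l) (hidx : Function.Injective idx)
    (c : Fin C.n → α) (hc : ∀ k, C.T.height (c k) = hi ∧ c k ∉ t ∧ a (idx k) < c k)
    (p : C.Cond) :
    ∃ p' : C.Cond, p.LE p' ∧ ∃ b : Fin l → α,
      (∀ i, C.T.height (b i) = hi ∧ b i ∉ t ∧ a i < b i) ∧
      (∀ k, b (idx k) = c k) ∧
      ∀ τ ∈ B, ∀ c' : C.Tup, (∀ i, c' i ∈ Set.range b) → C.Above τ c' →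
        ((τ, c') ∈ p'.dom ∧
         (¬ lo ≤ C.γ → C.Above τ (C.res c' lo) → (τ, C.res c' lo) ∈ p'.dom) ∧
         (∀ q ∈ R, C.Vv p' lo τ c' < q → p'.val (τ, c') < q)) := by
  classical
  have hloδ : lo < C.δ := lt_of_lt_of_le hlh hhd
  have hhiω : hi < omega1 := lt_of_le_of_lt hhd C.hδ
  set μ := max lo C.γ with hμ
  have hμhi : μ < hi := max_lt hlh hγhi
  have hloμ : lo ≤ μ := le_max_left _ _
  have hγμ : C.γ ≤ μ := le_max_right _ _
  -- Stage-μ data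
  obtain ⟨bb, p1, hpp1, hbblev, hbbge, hbbres, hbbidx, hK0, hγcons⟩ :
      ∃ (bb : Fin l → α) (p1 : C.Cond), p.LE p1 ∧
        (∀ i, C.T.height (bb i) = μ) ∧
        (∀ i, a i ≤ bb i) ∧
        (∀ i, C.T.restrict (bb i) lo = a i) ∧
        (∀ k, C.T.restrict (c k) μ = bb (idx k)) ∧
        (¬ lo ≤ C.γ → ∀ τ ∈ B, ∀ d : C.Tup, (∀ i, d i ∈ Set.range a) →
          C.Above τ d → (τ, d) ∈ p1.dom) ∧
        (lo ≤ C.γ → ∀ τ ∈ B, ∀ q ∈ R, ∀ d : C.Tup,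
          (∀ i, ∃ j, d i = C.T.restrict (bb j) C.γ) → C.Above τ d →
          C.f τ (C.res d lo) < q → C.f τ d < q) := by
    rcases le_or_gt lo C.γ with hloγ | hγlo
    · rcases eq_or_lt_of_le hloγ with heq | hlt
      · -- lo = γ
        have hμlo : μ = lo := by rw [hμ, ← heq, max_self]
        refine ⟨a, p, Cond.LE.refl p, fun i => by rw [hμlo]; exact halev i,
          fun i => le_rfl, fun i => C.T.restrict_self (halev i),
          fun k => by rw [hμlo]; exact C.T.restrict_eq (hc k).2.2.le (halev (idx k)),
          fun h => absurd hloγ h, ?_⟩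
        intro _ τ hτ q hq d hd hab hflt
        have htd : IsTupleOfHeight C.T d C.γ := by
          intro i
          obtain ⟨j, hj⟩ := hd i
          rw [hj]
          exact C.T.height_restrict (a j) (le_of_eq ((halev j).trans heq).symm)
        rwa [heq, C.res_eq_self htd] at hflt
      · -- lo < γ : use suitability of f
        have hμγ : μ = C.γ := max_eq_right hloγ
        have hck : ∀ k, C.T.height (C.T.restrict (c k) C.γ) = C.γ ∧
            C.T.restrict (c k) C.γ ∉ (∅ : Set α) ∧ a (idx k) < C.T.restrict (c k) C.γ := by
          intro k
          refine ⟨C.T.height_restrict (c k) (by rw [(hc k).1]; exact hγhi.le), by simp, ?_⟩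
          have h1 : C.T.restrict (c k) lo = a (idx k) :=
            C.T.restrict_eq (hc k).2.2.le (halev (idx k))
          rw [← h1]
          exact C.T.restrict_lt_restrict (c k) hlt (by rw [(hc k).1]; exact hγhi.le)
        obtain ⟨bb, hbb1, hbb2, hbb3⟩ := C.hfsuit lo C.γ hlt le_rfl B hBf hBI R hRf hRpos
          ∅ Set.finite_empty (by simp) l hnl a hainj halev idx hidx
          (fun k => C.T.restrict (c k) C.γ) hck
        refine ⟨bb, p, Cond.LE.refl p, fun i => by rw [hμγ]; exact (hbb1 i).1,
          fun i => (hbb1 i).2.2.le,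
          fun i => C.T.restrict_eq (hbb1 i).2.2.le (halev i),
          fun k => by rw [hμγ]; exact (hbb2 k).symm,
          fun h => absurd hloγ h, ?_⟩
        intro _ τ hτ q hq d hd hab hflt
        refine hbb3 τ hτ q hq d ?_ hab hflt
        intro i
        obtain ⟨j, hj⟩ := hd i
        refine ⟨j, ?_⟩
        rw [hj]
        exact (C.T.restrict_self (hbb1 j).1).symm
    · -- γ < lo
      have hμlo : μ = lo := max_eq_left hγlo.le
      set K0 := {k : Ordinal × C.Tup | k.1 ∈ B ∧ (∀ i, k.2 i ∈ Set.range a) ∧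
        C.Above k.1 k.2} with hK0'
      have hK0fin : K0.Finite :=
        (hBf.prod (C.tup_finite _ (Set.finite_range a))).subset (fun k hk => ⟨hk.1, hk.2.1⟩)
      have hK0v : ∀ k ∈ K0, C.ValidKey k := by
        rintro ⟨τ, d⟩ ⟨h1, h2, h3⟩
        refine ⟨hBI h1, h3, lo, hγlo, hloδ.le, ?_⟩
        intro i
        obtain ⟨j, hj⟩ := h2 i
        rw [← hj]
        exact halev j
      obtain ⟨p1, hp1, hK0p1⟩ := C.add_many K0 hK0fin p hK0v
      refine ⟨a, p1, hp1, fun i => by rw [hμlo]; exact halev i, fun i => le_rfl,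
        fun i => C.T.restrict_self (halev i),
        fun k => by rw [hμlo]; exact C.T.restrict_eq (hc k).2.2.le (halev (idx k)),
        fun _ τ hτ d hd hab => hK0p1 ⟨hτ, hd, hab⟩,
        fun h => absurd h (not_le.mpr hγlo)⟩
  -- Routing above level μ
  set F := ⋃ k ∈ p1.dom, Set.range k.2 with hF
  have hFfin : F.Finite := p1.fin.biUnion (fun k _ => Set.finite_range _)
  have hroute : ∀ j : Fin l, ∃ v, C.T.height v = hi ∧ bb j < v ∧ v ∉ t ∧
      ∀ x ∈ F, C.T.height (bb j) < C.T.height x → ¬ x ≤ v := fun j =>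
    C.T.route (bb j) (by rw [hbblev j]; exact hμhi) hhiω F t hFfin htf
  choose vf hv1 hv2 hv3 hv4 using hroute
  obtain ⟨b, hbdef⟩ : ∃ b : Fin l → α, ∀ i, b i =
      if h : ∃ k, idx k = i then c (Classical.choose h) else vf i := ⟨_, fun _ => rfl⟩
  have hbidx : ∀ k, b (idx k) = c k := by
    intro k
    have h : ∃ k', idx k' = idx k := ⟨k, rfl⟩
    rw [hbdef (idx k), dif_pos h]
    exact congrArg c (hidx (Classical.choose_spec h))
  have hbfree : ∀ j, (∀ k, idx k ≠ j) → b j = vf j := by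
    intro j hj
    rw [hbdef j, dif_neg (fun h : ∃ k, idx k = j => hj (Classical.choose h) (Classical.choose_spec h))]
  have hbprop : ∀ i, C.T.height (b i) = hi ∧ b i ∉ t ∧ a i < b i := by
    intro i
    by_cases h : ∃ k, idx k = i
    · rw [hbdef i, dif_pos h]
      obtain ⟨h1, h2, h3⟩ := hc (Classical.choose h)
      refine ⟨h1, h2, ?_⟩
      have heq2 : a (idx (Classical.choose h)) = a i := by
        rw [Classical.choose_spec h]
      rw [← heq2]
      exact h3
    · rw [hbdef i, dif_neg h]
      exact ⟨hv1 i, hv3 i, lt_of_le_of_lt (hbbge i) (hv2 i)⟩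
  have hbh : ∀ i, C.T.height (b i) = hi := fun i => (hbprop i).1
  have hbresμ : ∀ i, C.T.restrict (b i) μ = bb i := by
    intro i
    by_cases h : ∃ k, idx k = i
    · rw [hbdef i, dif_pos h, hbbidx (Classical.choose h), Classical.choose_spec h]
    · rw [hbdef i, dif_neg h]
      exact C.T.restrict_eq (hv2 i).le (hbblev i)
  have hbreslo : ∀ i, C.T.restrict (b i) lo = a i := by
    intro i
    have h1 : C.T.restrict (C.T.restrict (b i) μ) lo = C.T.restrict (b i) lo :=
      C.T.restrict_restrict (b i) hloμ (by rw [hbh i]; exact hμhi.le)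
    rw [← h1, hbresμ i, hbbres i]
  have hbresγ : ∀ i, C.T.restrict (b i) C.γ = C.T.restrict (bb i) C.γ := by
    intro i
    have h1 := C.T.restrict_restrict (b i) hγμ (by rw [hbh i]; exact hμhi.le)
    rw [← h1, hbresμ i]
  have htupb : ∀ c' : C.Tup, (∀ i, c' i ∈ Set.range b) → IsTupleOfHeight C.T c' hi := by
    intro c' h i
    obtain ⟨j, hj⟩ := h i
    rw [← hj]
    exact hbh j
  set K1 := {k : Ordinal × C.Tup | k.1 ∈ B ∧ (∀ i, k.2 i ∈ Set.range b) ∧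
    C.Above k.1 k.2} with hK1'
  have hK1fin : K1.Finite :=
    (hBf.prod (C.tup_finite _ (Set.finite_range b))).subset (fun k hk => ⟨hk.1, hk.2.1⟩)
  have hK1v : ∀ k ∈ K1, C.ValidKey k := fun k hk =>
    ⟨hBI hk.1, hk.2.2, hi, hγhi, hhd, htupb k.2 hk.2.1⟩
  have hfree : ∀ k ∈ K1, ∃ j : Fin l, (∀ k', idx k' ≠ j) ∧ ∃ i, k.2 i = vf j := by
    rintro ⟨τ, c'⟩ ⟨hτ, hrange, hab⟩
    obtain ⟨j, hj1, i, hi⟩ := C.free_coord (hBI hτ) hab b idx hrange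
    exact ⟨j, hj1, i, by rw [hi, hbfree j hj1]⟩
  have hK1fresh : ∀ k ∈ K1, k ∉ p1.dom := by
    intro k hk hkdom
    obtain ⟨j, hj1, i, hi⟩ := hfree k hk
    have hmem : vf j ∈ F := by
      rw [hF]
      exact Set.mem_biUnion hkdom ⟨i, hi⟩
    exact hv4 j (vf j) hmem (by rw [hbblev j, hv1 j]; exact hμhi) le_rfl
  have hK1pair : ∀ k ∈ K1, ∀ k' ∈ K1, ¬ C.CW k.2 k'.2 := by
    intro k hk k' hk' hcw
    have h1 := htupb k.2 hk.2.1 0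
    have h2 := htupb k'.2 hk'.2.1 0
    have h3 := C.T.height_strictMono (hcw 0)
    rw [h1, h2] at h3
    exact lt_irrefl _ h3
  set Uf : (Ordinal × C.Tup) → Set ℚ := fun k => {q | q ∈ R ∧ C.Vv p1 lo k.1 k.2 < q} with hUfdef
  have hUffin : ∀ k, (Uf k).Finite := fun k => hRf.subset (fun q hq => hq.1)
  have hUf1 : ∀ k ∈ K1, ∀ u ∈ Uf k, 0 < u := fun k _ u hu => hRpos u hu.1
  have hreskey : ∀ k ∈ K1, ¬ lo ≤ C.γ → C.Above k.1 (C.res k.2 lo) →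
      (k.1, C.res k.2 lo) ∈ p1.dom := by
    rintro ⟨τ, c'⟩ hk hγlo hab2
    have hkr : ∀ i, c' i ∈ Set.range b := hk.2.1
    refine hK0 hγlo τ hk.1 (C.res c' lo) ?_ hab2
    intro i
    obtain ⟨j, hj⟩ := hkr i
    have hj' : b j = c' i := hj
    refine ⟨j, ?_⟩
    show a j = C.T.restrict (c' i) lo
    rw [← hj']
    exact (hbreslo j).symm
  have hUf2 : ∀ k ∈ K1, ∀ u ∈ Uf k, C.f k.1 (C.res k.2 C.γ) < u := by
    rintro ⟨τ, c'⟩ hk u hu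
    have hτI : τ ∈ C.I := hBI hk.1
    have hkr : ∀ i, c' i ∈ Set.range b := hk.2.1
    have htc' : IsTupleOfHeight C.T c' hi := htupb c' hkr
    have hab : C.Above τ c' := hk.2.2
    obtain ⟨huR, huV⟩ := hu
    have hupos : (0 : ℚ) < u := hRpos u huR
    by_cases hloγ : lo ≤ C.γ
    · have hVv : C.Vv p1 lo τ c' = C.f τ (C.res c' lo) := by
        simp only [Vv]; rw [if_pos hloγ]
      rw [hVv] at huV
      by_cases hab2 : C.Above τ (C.res c' C.γ)
      · refine hγcons hloγ τ hk.1 u huR (C.res c' C.γ) ?_ hab2 ?_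
        · intro i
          obtain ⟨j, hj⟩ := hkr i
          have hj' : b j = c' i := hj
          refine ⟨j, ?_⟩
          show C.T.restrict (c' i) C.γ = C.T.restrict (bb j) C.γ
          rw [← hj']
          exact hbresγ j
        · rw [C.res_res hloγ htc' hγhi.le]
          exact huV
      · have hbel := C.below_res_of_not_above hτI hab htc' hγhi.le hab2
        rw [(C.hffam τ hτI).1 (C.res c' C.γ) C.γ le_rfl (C.res_tup htc' hγhi.le) hbel]
        linarith
    · by_cases hab2 : C.Above τ (C.res c' lo)
      · have hkey := hreskey (τ, c') hk hloγ hab2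
        have hVv : C.Vv p1 lo τ c' = p1.val (τ, C.res c' lo) := by
          simp only [Vv]; rw [if_neg hloγ, if_pos hab2]
        rw [hVv] at huV
        have hlbf := p1.lbf (τ, C.res c' lo) hkey
        have hre : C.res (C.res c' lo) C.γ = C.res c' C.γ :=
          C.res_res (not_le.mp hloγ).le htc' hlh.le
        rw [hre] at hlbf
        exact lt_trans hlbf huV
      · have hnaγ : ¬ C.Above τ (C.res c' C.γ) := by
          intro habγ
          obtain ⟨βτ, hth, _⟩ := C.amin_spec hτI
          have hβτγ : βτ ≤ C.γ := by
            have h5 := C.T.height_mono (habγ 0)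
            rwa [hth 0, (C.res_tup htc' hγhi.le) 0] at h5
          exact hab2 (C.above_res hab hth htc' (le_trans hβτγ (not_le.mp hloγ).le) hlh.le)
        have hbel := C.below_res_of_not_above hτI hab htc' hγhi.le hnaγ
        rw [(C.hffam τ hτI).1 (C.res c' C.γ) C.γ le_rfl (C.res_tup htc' hγhi.le) hbel]
        linarith
  have hUf3 : ∀ k ∈ K1, ∀ u ∈ Uf k, ∀ k' ∈ p1.dom, k'.1 = k.1 → C.CW k'.2 k.2 →
      p1.val k' < u := by
    rintro ⟨τ, c'⟩ hk u hu k' hk' he hcw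
    obtain ⟨huR, huV⟩ := hu
    obtain ⟨j, hj1, i0, hi0⟩ := hfree (τ, c') hk
    obtain ⟨hIk', habk', ζ', hζ'1, hζ'2, hζ'3⟩ := p1.keys k' hk'
    have he' : k'.1 = τ := he
    have htc' : IsTupleOfHeight C.T c' hi := htupb c' hk.2.1
    have hζμ : ζ' ≤ μ := by
      by_contra hcon
      push_neg at hcon
      have hmem : k'.2 i0 ∈ F := by
        rw [hF]
        exact Set.mem_biUnion hk' ⟨i0, rfl⟩
      refine hv4 j (k'.2 i0) hmem ?_ ?_
      · rw [hbblev j, hζ'3 i0]; exact hcon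
      · calc k'.2 i0 ≤ c' i0 := (hcw i0).le
          _ = vf j := hi0
    by_cases hloγ : lo ≤ C.γ
    · exfalso
      have hle : ζ' ≤ C.γ := le_trans hζμ (le_of_eq (by rw [hμ, max_eq_right hloγ]))
      exact absurd hζ'1 (not_lt.mpr hle)
    · have hγlo : C.γ < lo := not_le.mp hloγ
      have hζlo : ζ' ≤ lo := le_trans hζμ (le_of_eq (by rw [hμ, max_eq_left hγlo.le]))
      have hk'eq : k'.2 = C.res c' ζ' := (C.res_eq_of_le (fun i => (hcw i).le) hζ'3).symm
      have hab2 : C.Above τ (C.res c' lo) := by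
        intro i
        have h1 : C.amin τ i ≤ k'.2 i := he' ▸ habk' i
        refine le_trans h1 ?_
        rw [hk'eq]
        exact C.T.restrict_mono (c' i) hζlo (by rw [htc' i]; exact hlh.le)
      have hkey := hreskey (τ, c') hk hloγ hab2
      have hVv : C.Vv p1 lo τ c' = p1.val (τ, C.res c' lo) := by
        simp only [Vv]; rw [if_neg hloγ, if_pos hab2]
      rw [hVv] at huV
      rcases eq_or_lt_of_le hζlo with heq | hζlt
      · have hkeq : k' = (τ, C.res c' lo) := by
          refine Prod.ext he' ?_
          rw [hk'eq, heq]
        rw [hkeq]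
        exact huV
      · have hlt := p1.mono k' hk' (τ, C.res c' lo) hkey he ?_
        · exact lt_trans hlt huV
        · rw [hk'eq]
          exact C.res_cw hζlt htc' hlh.le
  obtain ⟨p2, hp12, hd2, hb2⟩ := C.add_fresh K1 hK1fin Uf p1 hK1v hK1fresh hK1pair
    (fun k _ => hUffin k) hUf1 hUf2 hUf3
  refine ⟨p2, hpp1.trans hp12, b, hbprop, hbidx, ?_⟩
  intro τ hτ c' hrange hab
  have hkK1 : (τ, c') ∈ K1 := ⟨hτ, hrange, hab⟩
  have hdom2 : (τ, c') ∈ p2.dom := by rw [hd2]; exact Or.inr hkK1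
  have hres2 : ¬ lo ≤ C.γ → C.Above τ (C.res c' lo) → (τ, C.res c' lo) ∈ p2.dom :=
    fun h1 h2 => hp12.1 (hreskey (τ, c') hkK1 h1 h2)
  refine ⟨hdom2, hres2, ?_⟩
  intro q hq hVvlt
  have hVveq : C.Vv p2 lo τ c' = C.Vv p1 lo τ c' := by
    by_cases hloγ : lo ≤ C.γ
    · simp only [Vv]; rw [if_pos hloγ, if_pos hloγ]
    · by_cases hab2 : C.Above τ (C.res c' lo)
      · simp only [Vv]; rw [if_neg hloγ, if_neg hloγ, if_pos hab2, if_pos hab2]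
        exact hp12.2 _ (hreskey (τ, c') hkK1 hloγ hab2)
      · simp only [Vv]; rw [if_neg hloγ, if_neg hloγ, if_neg hab2, if_neg hab2]
  rw [hVveq] at hVvlt
  exact hb2 (τ, c') hkK1 q ⟨hq, hVvlt⟩

end Ctx

/-- An initial segment `Iic o` of the ordinals below `ω₁` is countable. -/
theorem ordinal_Iic_countable {o : Ordinal} (ho : o < omega1) : (Set.Iic o).Countable := by
  have hsucc : o + 1 < omega1 := by
    have hlim : Order.IsSuccLimit ((Cardinal.aleph 1).ord) :=
      Cardinal.isSuccLimit_ord (Cardinal.aleph0_le_aleph 1)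
    rw [Ordinal.add_one_eq_succ]
    exact hlim.succ_lt ho
  have h1 : (Set.Iio (o + 1)).Countable := by
    rw [Cardinal.countable_iff_lt_aleph_one, Ordinal.mk_Iio_ordinal, Cardinal.lift_lt_aleph_one]
    exact Cardinal.lt_ord.mp hsucc
  refine h1.mono (fun x hx => ?_)
  refine Set.mem_Iio.mpr (lt_of_le_of_lt (Set.mem_Iic.mp hx) ?_)
  rw [Ordinal.add_one_eq_succ]
  exact Order.lt_succ o

/-- A list enumerating a finite subset of `P`, as a list of elements of `P`. -/
theorem exists_list_of_finite {β : Type*} {s : Set β} (hs : s.Finite) (P : Set β)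
    (hsub : ∀ x ∈ s, x ∈ P) :
    ∃ L : List {x // x ∈ P}, ∀ x, x ∈ s ↔ x ∈ L.map Subtype.val := by
  classical
  revert hsub
  refine Set.Finite.induction_on
    (motive := fun s _ => (∀ x ∈ s, x ∈ P) →
      ∃ L : List {x // x ∈ P}, ∀ x, x ∈ s ↔ x ∈ L.map Subtype.val) _ hs
    (fun _ => ⟨[], by simp⟩) ?_
  intro a s' ha hs' ih hsub
  obtain ⟨L, hL⟩ := ih (fun x hx => hsub x (Set.mem_insert_of_mem _ hx))
  refine ⟨⟨a, hsub a (Set.mem_insert _ _)⟩ :: L, fun x => ?_⟩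
  simp only [Set.mem_insert_iff, List.map_cons, List.mem_cons, hL x]

namespace Ctx

variable {α : Type} [PartialOrder α]

theorem levels_countable (C : Ctx α) : {x : α | C.T.height x ≤ C.δ}.Countable := by
  have h1 : {x : α | C.T.height x ≤ C.δ} = ⋃ β ∈ Set.Iic C.δ, {x | C.T.height x = β} := by
    ext x
    constructor
    · intro hx
      exact Set.mem_biUnion hx rfl
    · intro hx
      obtain ⟨β, hβ, hx'⟩ := Set.mem_iUnion₂.mp hx
      rw [Set.mem_setOf_eq] at hx' ⊢
      rw [hx']
      exact hβ
  rw [h1]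
  exact Set.Countable.biUnion (ordinal_Iic_countable C.hδ) (fun β _ => C.T.level_countable β)

/-- Nodes of height at most `δ`. -/
abbrev Adel (C : Ctx α) := ↥{x : α | C.T.height x ≤ C.δ}

/-- Elements of `I`. -/
abbrev Isub (C : Ctx α) := ↥C.I

/-- Ordinals at most `δ`. -/
abbrev OrdD (C : Ctx α) := ↥(Set.Iic C.δ)

instance (C : Ctx α) : Countable C.Adel := (levels_countable C).to_subtype
instance (C : Ctx α) : Countable C.Isub := C.hIc.to_subtype
instance (C : Ctx α) : Countable C.OrdD := (ordinal_Iic_countable C.hδ).to_subtype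

/-- Raw encodings of keys. -/
abbrev KeyRaw (C : Ctx α) := C.Isub × (Fin (C.n + 1) → C.Adel)

/-- Raw encodings of suitability challenges. -/
abbrev ChalRaw (C : Ctx α) :=
  C.OrdD × C.OrdD × List C.Isub × List ℚ × List C.Adel ×
    (Σ l : ℕ, (Fin l → C.Adel) × (Fin C.n → Fin l) × (Fin C.n → C.Adel))

/-- The tasks to be met by the generic sequence. -/
abbrev TaskT (C : Ctx α) := C.KeyRaw ⊕ C.ChalRaw

theorem task_nonempty (C : Ctx α) : Nonempty C.TaskT := by
  obtain ⟨r, hr, -⟩ := C.T.root_exists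
  have hrA : r ∈ {x : α | C.T.height x ≤ C.δ} := by
    rw [Set.mem_setOf_eq, hr]
    exact zero_le
  exact ⟨Sum.inr ⟨⟨0, Set.mem_Iic.mpr (zero_le)⟩,
    ⟨0, Set.mem_Iic.mpr (zero_le)⟩, [], [], [],
    ⟨C.n, fun _ => ⟨r, hrA⟩, id, fun _ => ⟨r, hrA⟩⟩⟩⟩

def decodeKey (C : Ctx α) (kr : C.KeyRaw) : Ordinal × C.Tup :=
  (kr.1.1, fun i => (kr.2 i).1)

/-- The meaning of a challenge task. -/
def MeetsChal (C : Ctx α) (ch : C.ChalRaw) (p : C.Cond) : Prop :=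
  match ch with
  | (lo', hi', LB, LR, Lt, ⟨l, a', idx, c'⟩) =>
    (lo'.1 < hi'.1 ∧ C.γ < hi'.1 ∧ C.n ≤ l ∧
     Function.Injective (fun i => (a' i).1) ∧ (∀ i, C.T.height (a' i).1 = lo'.1) ∧
     Function.Injective idx ∧ (∀ q ∈ {q : ℚ | q ∈ LR}, 0 < q) ∧
     (∀ k, C.T.height (c' k).1 = hi'.1 ∧ (c' k).1 ∉ {x : α | x ∈ Lt.map Subtype.val} ∧
        (a' (idx k)).1 < (c' k).1)) →
    ∃ b : Fin l → α,
      (∀ i, C.T.height (b i) = hi'.1 ∧ b i ∉ {x : α | x ∈ Lt.map Subtype.val} ∧ (a' i).1 < b i) ∧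
      (∀ k, b (idx k) = (c' k).1) ∧
      ∀ τ ∈ {τ : Ordinal | τ ∈ LB.map Subtype.val}, ∀ cc : C.Tup,
        (∀ i, cc i ∈ Set.range b) → C.Above τ cc →
        ((τ, cc) ∈ p.dom ∧
         (¬ lo'.1 ≤ C.γ → C.Above τ (C.res cc lo'.1) → (τ, C.res cc lo'.1) ∈ p.dom) ∧
         (∀ q ∈ {q : ℚ | q ∈ LR}, C.Vv p lo'.1 τ cc < q → p.val (τ, cc) < q))

def Meets (C : Ctx α) (p : C.Cond) : C.TaskT → Prop
  | Sum.inl kr => C.ValidKey (C.decodeKey kr) → C.decodeKey kr ∈ p.dom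
  | Sum.inr ch => C.MeetsChal ch p

theorem meets_cofinal (C : Ctx α) (i : C.TaskT) (p : C.Cond) :
    ∃ p' : C.Cond, p.LE p' ∧ C.Meets p' i := by
  classical
  cases i with
  | inl kr =>
    by_cases h : C.ValidKey (C.decodeKey kr)
    · obtain ⟨p', hp', hmem⟩ := C.add_many {C.decodeKey kr} (Set.finite_singleton _) p
        (by intro k hk; rw [Set.mem_singleton_iff] at hk; rw [hk]; exact h)
      exact ⟨p', hp', fun _ => hmem rfl⟩
    · exact ⟨p, Cond.LE.refl p, fun h' => absurd h' h⟩
  | inr ch =>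
    obtain ⟨lo', hi', LB, LR, Lt, l, a', idx, c'⟩ := ch
    by_cases hhyp : lo'.1 < hi'.1 ∧ C.γ < hi'.1 ∧ C.n ≤ l ∧
        Function.Injective (fun i => (a' i).1) ∧ (∀ i, C.T.height (a' i).1 = lo'.1) ∧
        Function.Injective idx ∧ (∀ q ∈ {q : ℚ | q ∈ LR}, 0 < q) ∧
        (∀ k, C.T.height (c' k).1 = hi'.1 ∧ (c' k).1 ∉ {x : α | x ∈ Lt.map Subtype.val} ∧
          (a' (idx k)).1 < (c' k).1)
    · obtain ⟨h1, h2, h3, h4, h5, h6, h7, h8⟩ := hhyp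
      obtain ⟨p', hp', b, hb1, hb2, hb3⟩ := C.density lo'.1 hi'.1 h1 (Set.mem_Iic.mp hi'.2) h2
        {τ | τ ∈ LB.map Subtype.val} (LB.map Subtype.val).finite_toSet
        (by rintro τ hτ; obtain ⟨⟨τ', hτ'⟩, hmem, rfl⟩ := List.mem_map.mp hτ; exact hτ')
        {q | q ∈ LR} LR.finite_toSet h7
        {x | x ∈ Lt.map Subtype.val} (Lt.map Subtype.val).finite_toSet
        l h3 (fun i => (a' i).1) h4 h5 idx h6 (fun k => (c' k).1) h8 p
      exact ⟨p', hp', fun _ => ⟨b, hb1, hb2, hb3⟩⟩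
    · exact ⟨p, Cond.LE.refl p, fun h' => absurd h' hhyp⟩

/-- The generic sequence of conditions. -/
noncomputable def seq (C : Ctx α) (e : ℕ → C.TaskT) : ℕ → C.Cond
  | 0 => C.emptyCond
  | k + 1 => (C.meets_cofinal (e k) (C.seq e k)).choose

theorem seq_le (C : Ctx α) (e : ℕ → C.TaskT) (k : ℕ) :
    (C.seq e k).LE (C.seq e (k + 1)) := (C.meets_cofinal (e k) (C.seq e k)).choose_spec.1

theorem seq_meets (C : Ctx α) (e : ℕ → C.TaskT) (k : ℕ) :
    C.Meets (C.seq e (k + 1)) (e k) := (C.meets_cofinal (e k) (C.seq e k)).choose_spec.2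

theorem seq_mono (C : Ctx α) (e : ℕ → C.TaskT) {k m : ℕ} (h : k ≤ m) :
    (C.seq e k).LE (C.seq e m) := by
  induction m with
  | zero =>
    rw [Nat.le_zero.mp h]
    exact Cond.LE.refl _
  | succ m ih =>
    rcases Nat.lt_or_ge k (m + 1) with h' | h'
    · exact (ih (Nat.lt_succ_iff.mp h')).trans (C.seq_le e m)
    · rw [Nat.le_antisymm h h']
      exact Cond.LE.refl _

open Classical in
/-- The final function `g`. -/
noncomputable def gfun (C : Ctx α) (e : ℕ → C.TaskT) : Ordinal → C.Tup → ℚ := fun τ cc =>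
  if h : ∃ k, (τ, cc) ∈ (C.seq e k).dom then (C.seq e h.choose).val (τ, cc)
  else if C.Below τ cc then -1 else C.f τ cc

theorem gfun_eq (C : Ctx α) (e : ℕ → C.TaskT) {τ : Ordinal} {cc : C.Tup} {k : ℕ}
    (h : (τ, cc) ∈ (C.seq e k).dom) : C.gfun e τ cc = (C.seq e k).val (τ, cc) := by
  classical
  have hex : ∃ k', (τ, cc) ∈ (C.seq e k').dom := ⟨k, h⟩
  rw [gfun, dif_pos hex]
  rcases le_total hex.choose k with h1 | h1
  · exact ((C.seq_mono e h1).2 _ hex.choose_spec).symm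
  · exact (C.seq_mono e h1).2 _ h

open Classical in
theorem g_default (C : Ctx α) (e : ℕ → C.TaskT) {τ : Ordinal} {cc : C.Tup}
    (h : ¬ C.Above τ cc) :
    C.gfun e τ cc = if C.Below τ cc then -1 else C.f τ cc := by
  classical
  have hnd : ¬ ∃ k, (τ, cc) ∈ (C.seq e k).dom := by
    rintro ⟨k, hk⟩
    exact h ((C.seq e k).keys _ hk).2.1
  rw [gfun, dif_neg hnd]

open Classical in
theorem g_below (C : Ctx α) (e : ℕ → C.TaskT) {τ : Ordinal} {cc : C.Tup}
    (hb : C.Below τ cc) : C.gfun e τ cc = -1 := by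
  rw [C.g_default e (C.not_above_of_below hb), if_pos hb]

theorem g_low (C : Ctx α) (e : ℕ → C.TaskT) {τ : Ordinal} {cc : C.Tup} {ζ : Ordinal}
    (hτI : τ ∈ C.I) (htc : IsTupleOfHeight C.T cc ζ) (hζ : ζ ≤ C.γ) :
    C.gfun e τ cc = C.f τ cc := by
  classical
  have hnd : ¬ ∃ k, (τ, cc) ∈ (C.seq e k).dom := by
    rintro ⟨k, hk⟩
    obtain ⟨-, -, ζ', h1, -, h3⟩ := (C.seq e k).keys _ hk
    rw [C.tup_height_unique htc h3] at hζ
    exact absurd h1 (not_lt.mpr hζ)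
  rw [gfun, dif_neg hnd]
  by_cases hb : C.Below τ cc
  · rw [if_pos hb]
    exact ((C.hffam τ hτI).1 cc ζ hζ htc hb).symm
  · rw [if_neg hb]

theorem g_decided (C : Ctx α) (e : ℕ → C.TaskT) (he : Function.Surjective e)
    {τ : Ordinal} {cc : C.Tup} (h : C.ValidKey (τ, cc)) :
    ∃ k, (τ, cc) ∈ (C.seq e k).dom := by
  have hτI : τ ∈ C.I := h.1
  have hδle : ∀ i, cc i ∈ {x : α | C.T.height x ≤ C.δ} := by
    obtain ⟨ζ, h1, h2, h3⟩ := h.2.2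
    intro i
    rw [Set.mem_setOf_eq, h3 i]
    exact h2
  obtain ⟨k, hk⟩ := he (Sum.inl (⟨⟨τ, hτI⟩, fun i => ⟨cc i, hδle i⟩⟩ : C.KeyRaw))
  refine ⟨k + 1, ?_⟩
  have hm := C.seq_meets e k
  rw [hk] at hm
  exact hm h

theorem g_spec (C : Ctx α) (e : ℕ → C.TaskT) (he : Function.Surjective e) :
    ∀ τ ∈ C.I, IsSpecFun C.T (C.amin τ) C.δ (C.gfun e τ) := by
  intro τ hτI
  refine ⟨?_, ?_, ?_⟩
  · intro cc ζ hζ htc hbel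
    exact C.g_below e hbel
  · intro cc ζ hζ htc hab
    by_cases hζγ : ζ ≤ C.γ
    · rw [C.g_low e hτI htc hζγ]
      exact (C.hffam τ hτI).2.1 cc ζ hζγ htc hab
    · have hvk : C.ValidKey (τ, cc) := ⟨hτI, hab, ζ, not_le.mp hζγ, hζ, htc⟩
      obtain ⟨k, hk⟩ := C.g_decided e he hvk
      rw [C.gfun_eq e hk]
      exact (C.seq e k).lb0 _ hk
  · intro bb cc ζ ξ hζ hξ htb htc habb habc hcw
    by_cases hξγ : ξ ≤ C.γ
    · have hζγ : ζ ≤ C.γ := by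
        have h0 := C.T.height_strictMono (hcw 0)
        rw [htb 0, htc 0] at h0
        exact le_trans h0.le hξγ
      rw [C.g_low e hτI htb hζγ, C.g_low e hτI htc hξγ]
      exact (C.hffam τ hτI).2.2 bb cc ζ ξ hζγ hξγ htb htc habb habc hcw
    · have hγξ : C.γ ≤ ξ := (not_le.mp hξγ).le
      have hvc : C.ValidKey (τ, cc) := ⟨hτI, habc, ξ, not_le.mp hξγ, hξ, htc⟩
      obtain ⟨k2, hk2⟩ := C.g_decided e he hvc
      by_cases hζγ : ζ ≤ C.γ
      · rw [C.g_low e hτI htb hζγ, C.gfun_eq e hk2]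
        have hlbf := (C.seq e k2).lbf _ hk2
        rcases eq_or_lt_of_le hζγ with heq | hlt
        · have hbeq : C.res cc C.γ = bb := by
            rw [← heq]
            exact C.res_eq_of_le (fun i => (hcw i).le) htb
          calc C.f τ bb = C.f τ (C.res cc C.γ) := by rw [hbeq]
            _ < _ := hlbf
        · have habres : C.Above τ (C.res cc C.γ) := by
            obtain ⟨βτ, hth, _⟩ := C.amin_spec hτI
            have hβτ : βτ ≤ ζ := by
              have h0 := C.T.height_mono (habb 0)
              rwa [hth 0, htb 0] at h0
            exact C.above_res habc hth htc (le_trans hβτ hζγ) hγξ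
          have hcwres : C.CW bb (C.res cc C.γ) := by
            have hbeq : C.res cc ζ = bb := C.res_eq_of_le (fun i => (hcw i).le) htb
            rw [← hbeq]
            exact C.res_cw hlt htc hγξ
          have hmono := (C.hffam τ hτI).2.2 bb (C.res cc C.γ) ζ C.γ hζγ le_rfl htb
            (C.res_tup htc hγξ) habb habres hcwres
          exact lt_trans hmono hlbf
      · have hvb : C.ValidKey (τ, bb) := ⟨hτI, habb, ζ, not_le.mp hζγ, hζ, htb⟩
        obtain ⟨k1, hk1⟩ := C.g_decided e he hvb
        have h1 : (τ, bb) ∈ (C.seq e (max k1 k2)).dom :=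
          (C.seq_mono e (le_max_left k1 k2)).1 hk1
        have h2 : (τ, cc) ∈ (C.seq e (max k1 k2)).dom :=
          (C.seq_mono e (le_max_right k1 k2)).1 hk2
        rw [C.gfun_eq e h1, C.gfun_eq e h2]
        exact (C.seq e (max k1 k2)).mono _ h1 _ h2 rfl hcw

theorem g_extends (C : Ctx α) (e : ℕ → C.TaskT) :
    ∀ τ ∈ C.I, SpecExtends C.T (C.amin τ) C.γ (C.f τ) (C.gfun e τ) := by
  intro τ hτI cc ζ hζ htc h
  rcases h with hab | hbel
  · exact C.g_low e hτI htc hζ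
  · rw [C.g_below e hbel]
    exact ((C.hffam τ hτI).1 cc ζ hζ htc hbel).symm

theorem g_consistentX (C : Ctx α) (e : ℕ → C.TaskT) (he : Function.Surjective e) :
    ∀ τ ∈ C.A, SpecConsistent C.T (C.amin τ) (C.gfun e τ) C.γ C.Q C.X := by
  intro τ hτA q hq cc hccX hab hlt
  have hτI := C.hAsub hτA
  have htc : IsTupleOfHeight C.T cc C.δ := fun i => C.hXlev _ (hccX i)
  have hvk : C.ValidKey (τ, cc) := ⟨hτI, hab, C.δ, C.hγδ, le_rfl, htc⟩
  obtain ⟨k, hk⟩ := C.g_decided e he hvk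
  have hlt' : C.gfun e τ (C.res cc C.γ) < q := hlt
  rw [C.g_low e hτI (C.res_tup htc C.hγδ.le) le_rfl] at hlt'
  rw [C.gfun_eq e hk]
  exact (C.seq e k).cap _ hk q ⟨hq, hτA, cc, hccX, hab, fun i => le_rfl, hlt'⟩

theorem g_suitable (C : Ctx α) (e : ℕ → C.TaskT) (he : Function.Surjective e) :
    SuitableFamily C.T C.amin C.I C.δ (C.gfun e) := by
  intro lo hi hlh hhd B hBf hBI R hRf hRpos t htf htlev l hnl a hainj halev idx hidx c hc
  by_cases hhinγ : hi ≤ C.γ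
  · -- everything happens at levels `≤ γ`, where `g = f`; use suitability of `f`
    obtain ⟨b, hb1, hb2, hb3⟩ := C.hfsuit lo hi hlh hhinγ B hBf hBI R hRf hRpos t htf htlev
      l hnl a hainj halev idx hidx c hc
    refine ⟨b, hb1, hb2, ?_⟩
    intro τ hτ q hq cc hccb hab hlt
    have hτI := hBI hτ
    have htcc : IsTupleOfHeight C.T cc hi := by
      intro i
      obtain ⟨j, hj⟩ := hccb i
      rw [← hj]
      exact (hb1 j).1
    have hlt' : C.gfun e τ (C.res cc lo) < q := hlt
    rw [C.g_low e hτI (C.res_tup htcc hlh.le) (le_trans hlh.le hhinγ)] at hlt'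
    rw [C.g_low e hτI htcc hhinγ]
    exact hb3 τ hτ q hq cc hccb hab hlt'
  · -- encode the challenge as a task and use genericity
    have hγhi : C.γ < hi := not_le.mp hhinγ
    have hloδ : lo < C.δ := lt_of_lt_of_le hlh hhd
    obtain ⟨LB, hLB⟩ := exists_list_of_finite hBf C.I hBI
    obtain ⟨Lt, hLt⟩ := exists_list_of_finite htf {x : α | C.T.height x ≤ C.δ}
      (fun x hx => by rw [Set.mem_setOf_eq, htlev x hx]; exact hhd)
    obtain ⟨LR, hLR⟩ : ∃ LR : List ℚ, ∀ q : ℚ, q ∈ R ↔ q ∈ LR :=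
      ⟨hRf.toFinset.toList, fun q => by simp [Set.Finite.mem_toFinset]⟩
    have hBeq : {τ : Ordinal | τ ∈ LB.map Subtype.val} = B := Set.ext (fun τ => (hLB τ).symm)
    have hReq : {q : ℚ | q ∈ LR} = R := Set.ext (fun q => (hLR q).symm)
    have hteq : {x : α | x ∈ Lt.map Subtype.val} = t := Set.ext (fun x => (hLt x).symm)
    obtain ⟨k, hk⟩ := he (Sum.inr (⟨lo, Set.mem_Iic.mpr hloδ.le⟩, ⟨hi, Set.mem_Iic.mpr hhd⟩,
      LB, LR, Lt,
      ⟨l, fun i => ⟨a i, by rw [Set.mem_setOf_eq, halev i]; exact hloδ.le⟩, idx,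
        fun j => ⟨c j, by rw [Set.mem_setOf_eq, (hc j).1]; exact hhd⟩⟩))
    have hm := C.seq_meets e k
    rw [hk] at hm
    obtain ⟨b, hb1, hb2, hb3⟩ := hm ⟨hlh, hγhi, hnl, hainj, halev, hidx,
      (by rw [hReq]; exact hRpos), (by rw [hteq]; exact hc)⟩
    rw [hteq] at hb1
    rw [hBeq] at hb3
    refine ⟨b, hb1, hb2, ?_⟩
    intro τ hτ q hq cc hccb hab hlt
    have hτI := hBI hτ
    obtain ⟨hdom, hres, himp⟩ := hb3 τ hτ cc hccb hab
    rw [hReq] at himp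
    have htcc : IsTupleOfHeight C.T cc hi := by
      intro i
      obtain ⟨j, hj⟩ := hccb i
      rw [← hj]
      exact (hb1 j).1
    have hgv : C.gfun e τ (C.res cc lo) = C.Vv (C.seq e (k + 1)) lo τ cc := by
      by_cases hloγ : lo ≤ C.γ
      · rw [C.g_low e hτI (C.res_tup htcc hlh.le) hloγ]
        simp only [Vv]
        rw [if_pos hloγ]
      · by_cases hab2 : C.Above τ (C.res cc lo)
        · rw [C.gfun_eq e (hres hloγ hab2)]
          simp only [Vv]
          rw [if_neg hloγ, if_pos hab2]
        · have hbel := C.below_res_of_not_above hτI hab htcc hlh.le hab2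
          rw [C.g_below e hbel]
          simp only [Vv]
          rw [if_neg hloγ, if_neg hab2]
    have hlt' : C.gfun e τ (C.res cc lo) < q := hlt
    rw [hgv] at hlt'
    rw [C.gfun_eq e hdom]
    exact himp q hq hlt'

end Ctx

theorem suitable_family_extension'
    {α : Type} [PartialOrder α]
    (T : OmegaOneTree α) (n : ℕ) (hn : 1 ≤ n)
    (amin : Ordinal → Fin (n + 1) → α)
    (hamin : ∀ τ : Ordinal, τ < omega1 → ∃ β, MinimalTuple T (amin τ) β)
    (γ δ : Ordinal) (hγδ : γ < δ) (hδ : δ < omega1)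
    (I : Set Ordinal) (hI : I ⊆ Set.Iio omega1) (hIc : I.Countable)
    (f : Ordinal → (Fin (n + 1) → α) → ℚ)
    (hffam : ∀ τ ∈ I, IsSpecFun T (amin τ) γ (f τ))
    (hfsuit : SuitableFamily T amin I γ f)
    (Q : Set ℚ) (hQfin : Q.Finite) (hQpos : ∀ q ∈ Q, 0 < q)
    (A : Set Ordinal) (hAsub : A ⊆ I) (hAfin : A.Finite)
    (X : Set α) (hXfin : X.Finite) (hXlev : ∀ x ∈ X, T.height x = δ) :
    ∃ g : Ordinal → (Fin (n + 1) → α) → ℚ,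
      (∀ τ ∈ I, IsSpecFun T (amin τ) δ (g τ)) ∧
      SuitableFamily T amin I δ g ∧
      (∀ τ ∈ I, SpecExtends T (amin τ) γ (f τ) (g τ)) ∧
      (∀ τ ∈ A, SpecConsistent T (amin τ) (g τ) γ Q X) := by
  classical
  let C : Ctx α := ⟨T, n, amin, hamin, γ, δ, hγδ, hδ, I, hI, hIc, f, hffam, hfsuit,
    Q, hQfin, hQpos, A, hAsub, hAfin, X, hXfin, hXlev⟩
  haveI : Nonempty C.TaskT := C.task_nonempty
  haveI h1 : Countable C.Isub := C.hIc.to_subtype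
  haveI h2 : Countable C.OrdD := (ordinal_Iic_countable C.hδ).to_subtype
  haveI h3 : Countable C.Adel := (Ctx.levels_countable C).to_subtype
  haveI h4 : Countable C.KeyRaw := by infer_instance
  haveI h5 : Countable C.ChalRaw := by infer_instance
  obtain ⟨e, he⟩ := exists_surjective_nat C.TaskT
  exact ⟨C.gfun e, C.g_spec e he, C.g_suitable e he, C.g_extends e, C.g_consistentX e he⟩


/-- Proposition 3.10: a suitable specializing family with top level `γ` extends to a
suitable specializing family with any higher countable top level `δ`, preserving
consistency on a prescribed finite set `X ⊆ T_δ` with unique drop-downs to `γ`. -/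
theorem suitable_family_extension
    (T : OmegaOneTree α) (n : ℕ) (hn : 1 ≤ n)
    (amin : Ordinal → Fin (n + 1) → α)
    (hamin : ∀ τ : Ordinal, τ < omega1 → ∃ β, MinimalTuple T (amin τ) β)
    (γ δ : Ordinal) (hγδ : γ < δ) (hδ : δ < omega1)
    (I : Set Ordinal) (hI : I ⊆ Set.Iio omega1) (hIc : I.Countable)
    (f : Ordinal → (Fin (n + 1) → α) → ℚ)
    (hffam : ∀ τ ∈ I, IsSpecFun T (amin τ) γ (f τ))
    (hfsuit : SuitableFamily T amin I γ f)
    (Q : Set ℚ) (hQfin : Q.Finite) (hQpos : ∀ q ∈ Q, 0 < q)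
    (A : Set Ordinal) (hAsub : A ⊆ I) (hAfin : A.Finite)
    (X : Set α) (hXfin : X.Finite) (hXlev : ∀ x ∈ X, T.height x = δ)
    (hXdrop : Set.InjOn (fun x => T.restrict x γ) X) :
    ∃ g : Ordinal → (Fin (n + 1) → α) → ℚ,
      (∀ τ ∈ I, IsSpecFun T (amin τ) δ (g τ)) ∧
      SuitableFamily T amin I δ g ∧
      (∀ τ ∈ I, SpecExtends T (amin τ) γ (f τ) (g τ)) ∧
      (∀ τ ∈ A, SpecConsistent T (amin τ) (g τ) γ Q X) := by
  exact suitable_family_extension' T n hn amin hamin γ δ hγδ hδ I hI hIc f hffam hfsuit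
    Q hQfin hQpos A hAsub hAfin X hXfin hXlev
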